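/- arXiv:1601.07647 — 2 statements merged into one kernel-verified Lean document; each statement's English description precedes it below -/
import Mathlib

section
/- Let C ⊆ (Z_2)^n with sum of elements σ = 0. Then the cubelike graph X(C) is periodic at time π/2, i.e., H(π/2) is a unimodular scalar multiple of the identity matrix (specifically H(π/2) = i^{|C|}·I). -/
open Matrix Complex
open scoped Nat

noncomputable def cubeAdj {n : ℕ} (C : Finset (Fin n → ZMod 2)) :
    Matrix (Fin n → ZMod 2) (Fin n → ZMod 2) ℂ :=
  Matrix.of fun u v => if u - v ∈ C then 1 else 0

/-- The permutation matrix of translation by `x`. -/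
noncomputable def cubeP {n : ℕ} (x : Fin n → ZMod 2) :
    Matrix (Fin n → ZMod 2) (Fin n → ZMod 2) ℂ :=
  Matrix.of fun u v => if u - v = x then 1 else 0

lemma cubeP_mul {n : ℕ} (x y : Fin n → ZMod 2) :
    cubeP x * cubeP y = cubeP (x + y) := by
  ext u v
  simp only [cubeP, Matrix.mul_apply, Matrix.of_apply]
  rw [Finset.sum_eq_single (u - x)]
  · have h1 : u - (u - x) = x := by abel
    have h2 : u - x - v = y ↔ u - v = x + y := by
      rw [sub_sub, sub_eq_iff_eq_add, sub_eq_iff_eq_add]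
      constructor <;> intro h <;> rw [h] <;> abel
    simp [h1, h2]
  · intro w _ hw
    have : u - w ≠ x := fun h => hw (by rw [← h]; abel)
    simp [this]
  · intro h
    exact absurd (Finset.mem_univ _) h

lemma cubeP_zero {n : ℕ} : cubeP (0 : Fin n → ZMod 2) = 1 := by
  ext u v
  simp [cubeP, Matrix.one_apply, sub_eq_zero]

lemma self_add_self {n : ℕ} (x : Fin n → ZMod 2) : x + x = 0 := by
  funext i
  exact CharTwo.add_self_eq_zero _

lemma cubeP_sq {n : ℕ} (x : Fin n → ZMod 2) : cubeP x * cubeP x = 1 := by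
  rw [cubeP_mul, self_add_self, cubeP_zero]

lemma cubeAdj_eq_sum {n : ℕ} (C : Finset (Fin n → ZMod 2)) :
    cubeAdj C = ∑ x ∈ C, cubeP x := by
  ext u v
  simp only [cubeAdj, Matrix.of_apply, Matrix.sum_apply, cubeP]
  rw [Finset.sum_ite_eq]

/-- Key lemma: the exponential of `(π/2)i` times an involutory matrix. -/
lemma exp_pihalf_smul_involution {m : Type*} [Fintype m] [DecidableEq m]
    (M : Matrix m m ℂ) (hM : M * M = 1) :
    NormedSpace.exp ((((Real.pi / 2 : ℝ) : ℂ) * Complex.I) • M) = Complex.I • M := by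
  letI : SeminormedRing (Matrix m m ℂ) := Matrix.linftyOpSemiNormedRing
  letI : NormedRing (Matrix m m ℂ) := Matrix.linftyOpNormedRing
  letI : NormedAlgebra ℂ (Matrix m m ℂ) := Matrix.linftyOpNormedAlgebra
  set c : ℂ := ((Real.pi / 2 : ℝ) : ℂ) * Complex.I with hc
  have hM2 : M ^ 2 = 1 := by rw [sq, hM]
  have heven : HasSum (fun k : ℕ => (((2 * k)! : ℂ)⁻¹) • (c • M) ^ (2 * k))
      (0 : Matrix m m ℂ) := by
    have h1 : HasSum (fun k : ℕ => c ^ (2 * k) / ((2 * k)! : ℂ)) 0 := by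
      have := Complex.hasSum_cos' ((Real.pi / 2 : ℝ) : ℂ)
      rw [← Complex.ofReal_cos, Real.cos_pi_div_two, Complex.ofReal_zero] at this
      exact this
    have h2 := h1.smul_const (1 : Matrix m m ℂ)
    rw [zero_smul] at h2
    convert h2 using 1
    funext k
    rw [smul_pow, pow_mul M 2 k, hM2, one_pow, smul_smul]
    congr 1
    ring
  have hodd : HasSum (fun k : ℕ => (((2 * k + 1)! : ℂ)⁻¹) • (c • M) ^ (2 * k + 1))
      (Complex.I • M) := by
    have h1 : HasSum (fun k : ℕ => c ^ (2 * k + 1) / ((2 * k + 1)! : ℂ)) Complex.I := by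
      have h2 := (Complex.hasSum_sin' ((Real.pi / 2 : ℝ) : ℂ)).mul_right Complex.I
      rw [← Complex.ofReal_sin, Real.sin_pi_div_two, Complex.ofReal_one, one_mul] at h2
      convert h2 using 1
      · rfl
      funext k
      rw [div_mul_cancel₀ _ Complex.I_ne_zero]
    have h3 := h1.smul_const M
    convert h3 using 1
    funext k
    rw [smul_pow, pow_succ M, pow_mul M 2 k, hM2, one_pow, one_mul, smul_smul]
    congr 1
    ring
  have key : HasSum (fun n : ℕ => ((n ! : ℂ)⁻¹) • (c • M) ^ n)
      ((0 : Matrix m m ℂ) + Complex.I • M) := HasSum.even_add_odd heven hodd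
  rw [zero_add] at key
  rw [NormedSpace.exp_eq_tsum ℂ]
  exact key.tsum_eq

lemma cubeAdj_exp_general {n : ℕ} (s : Finset (Fin n → ZMod 2)) :
    NormedSpace.exp ((((Real.pi / 2 : ℝ) : ℂ) * Complex.I) • cubeAdj s) =
      (Complex.I ^ s.card) • cubeP (∑ x ∈ s, x) := by
  classical
  induction s using Finset.induction_on with
  | empty =>
      have h0 : cubeAdj (∅ : Finset (Fin n → ZMod 2)) = 0 := by
        ext u v; simp [cubeAdj]
      rw [h0, smul_zero, NormedSpace.exp_zero]
      simp [cubeP_zero]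
  | @insert a s ha ih =>
      set c : ℂ := ((Real.pi / 2 : ℝ) : ℂ) * Complex.I with hc
      have hsplit : cubeAdj (insert a s) = cubeP a + cubeAdj s := by
        rw [cubeAdj_eq_sum, cubeAdj_eq_sum, Finset.sum_insert ha]
      have hcomm : Commute (c • cubeP a) (c • cubeAdj s) := by
        apply Commute.smul_left
        apply Commute.smul_right
        rw [cubeAdj_eq_sum]
        apply Commute.sum_right
        intro x _
        show cubeP a * cubeP x = cubeP x * cubeP a
        rw [cubeP_mul, cubeP_mul, add_comm]
      rw [hsplit, smul_add, Matrix.exp_add_of_commute _ _ hcomm, ih,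
        exp_pihalf_smul_involution _ (cubeP_sq a)]
      rw [smul_mul_smul_comm, cubeP_mul, Finset.sum_insert ha, Finset.card_insert_of_notMem ha,
        pow_succ, mul_comm]

theorem cubelike_periodic (n : ℕ) (C : Finset (Fin n → ZMod 2))
    (hσ : (∑ x ∈ C, x) = 0) :
    NormedSpace.exp ((((Real.pi / 2 : ℝ) : ℂ) * Complex.I) • cubeAdj C) =
      (Complex.I ^ C.card) • (1 : Matrix (Fin n → ZMod 2) (Fin n → ZMod 2) ℂ) ∧
    ‖Complex.I ^ C.card‖ = 1 := by
  constructor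
  · rw [cubeAdj_exp_general, hσ, cubeP_zero]
  · rw [norm_pow, Complex.norm_I, one_pow]
end

section
/- Let C ⊆ (Z_2)^n with Σ_{x∈C} x = 0 and |C| odd, let A be the adjacency matrix of X(C), and let B be a symmetric integer-spectrum matrix with spectral decomposition B = Σ_s μ_s F_s. Then exp(i π (A ⊗ B)) is a unimodular scalar multiple of the identity if and only if all eigenvalues μ_s of B have the same parity. -/
open Matrix Kronecker Complex

section ExpHelpers

variable {m : Type*} [Fintype m] [DecidableEq m]

lemma pow_succ_of_idem (Q : Matrix m m ℂ) (h : Q * Q = Q) : ∀ k : ℕ, Q ^ (k + 1) = Q := by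
  intro k
  induction k with
  | zero => simp
  | succ k ih => rw [pow_succ, ih, h]

set_option maxHeartbeats 1000000 in
lemma exp_smul_idem (c : ℂ) (Q : Matrix m m ℂ) (h : Q * Q = Q) :
    NormedSpace.exp (c • Q) = 1 + (Complex.exp c - 1) • Q := by
  letI : SeminormedRing (Matrix m m ℂ) := Matrix.linftyOpSemiNormedRing
  letI : NormedRing (Matrix m m ℂ) := Matrix.linftyOpNormedRing
  letI : NormedAlgebra ℂ (Matrix m m ℂ) := Matrix.linftyOpNormedAlgebra
  have hsummable : Summable (fun k : ℕ => ((k.factorial : ℂ))⁻¹ • (c • Q) ^ k) :=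
    NormedSpace.expSeries_summable' (𝕂 := ℂ) (c • Q)
  have hscalar : Summable (fun k : ℕ => ((k.factorial : ℂ))⁻¹ * c ^ k) := by
    simpa [smul_eq_mul] using NormedSpace.expSeries_summable' (𝕂 := ℂ) c
  have hscalar' : Summable (fun k : ℕ => (((k+1).factorial : ℂ))⁻¹ * c ^ (k+1)) :=
    (summable_nat_add_iff 1).2 hscalar
  have hc : Complex.exp c = 1 + ∑' k : ℕ, (((k+1).factorial : ℂ))⁻¹ * c ^ (k+1) := by
    have h1 : Complex.exp c = ∑' k : ℕ, ((k.factorial : ℂ))⁻¹ * c ^ k := by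
      rw [Complex.exp_eq_exp_ℂ, NormedSpace.exp_eq_tsum ℂ]
      simp [smul_eq_mul]
    rw [h1, Summable.tsum_eq_zero_add hscalar]
    simp
  rw [NormedSpace.exp_eq_tsum ℂ]
  beta_reduce
  rw [Summable.tsum_eq_zero_add hsummable]
  have htail : ∀ k : ℕ, (((k+1).factorial : ℂ))⁻¹ • (c • Q) ^ (k+1)
      = ((((k+1).factorial : ℂ))⁻¹ * c ^ (k+1)) • Q := by
    intro k
    rw [smul_pow, pow_succ_of_idem Q h, smul_smul]
  simp only [htail, pow_zero]
  rw [Summable.tsum_smul_const hscalar']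
  rw [hc]
  simp [add_smul]

end ExpHelpers
section ExpHelpers2

variable {m : Type*} [Fintype m] [DecidableEq m]

lemma exp_sum_orth_idem {ι : Type*} [DecidableEq ι] (s : Finset ι) (c : ι → ℂ)
    (Q : ι → Matrix m m ℂ)
    (horth : ∀ i j, i ≠ j → Q i * Q j = 0) (hidem : ∀ i, Q i * Q i = Q i) :
    NormedSpace.exp (∑ i ∈ s, c i • Q i) = 1 + ∑ i ∈ s, (Complex.exp (c i) - 1) • Q i := by
  induction s using Finset.cons_induction with
  | empty => simp
  | cons a s ha ih =>
    rw [Finset.sum_cons, Finset.sum_cons]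
    have hcomm : Commute (c a • Q a) (∑ i ∈ s, c i • Q i) := by
      apply Commute.sum_right
      intro i hi
      have hne : a ≠ i := fun he => ha (he ▸ hi)
      unfold Commute SemiconjBy
      rw [Algebra.mul_smul_comm, Algebra.smul_mul_assoc, smul_smul,
        Algebra.mul_smul_comm, Algebra.smul_mul_assoc, smul_smul,
        horth a i hne, horth i a hne.symm, smul_zero, smul_zero]
    rw [Matrix.exp_add_of_commute _ _ hcomm, ih, exp_smul_idem _ _ (hidem a)]
    have hQa : Q a * ∑ i ∈ s, (Complex.exp (c i) - 1) • Q i = 0 := by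
      rw [Finset.mul_sum]
      apply Finset.sum_eq_zero
      intro i hi
      rw [Algebra.mul_smul_comm, horth a i (fun he => ha (he ▸ hi)), smul_zero]
    rw [add_mul, mul_add, mul_add, one_mul, mul_one, Algebra.smul_mul_assoc, hQa,
      smul_zero, add_zero]
    rw [one_mul]; abel

lemma exp_spectral {ι : Type*} [DecidableEq ι] [Fintype ι] (c : ι → ℂ)
    (Q : ι → Matrix m m ℂ) (hone : ∑ i, Q i = 1)
    (horth : ∀ i j, i ≠ j → Q i * Q j = 0) (hidem : ∀ i, Q i * Q i = Q i) :
    NormedSpace.exp (∑ i, c i • Q i) = ∑ i, Complex.exp (c i) • Q i := by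
  rw [exp_sum_orth_idem Finset.univ c Q horth hidem, ← hone, ← Finset.sum_add_distrib]
  congr 1
  ext i : 1
  rw [sub_smul, one_smul]
  abel

end ExpHelpers2
section Characters

noncomputable def sgn (z : ZMod 2) : ℂ := if z = 0 then 1 else -1

lemma sgn_zero : sgn 0 = 1 := by simp [sgn]

lemma sgn_add (x y : ZMod 2) : sgn (x + y) = sgn x * sgn y := by
  have h2 : ((1 : ZMod 2) + 1) = 0 := by decide
  have key : ∀ a b : ZMod 2, (a + b = 0 ↔ (a = 0 ↔ b = 0)) := by decide
  unfold sgn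
  by_cases hx : x = 0 <;> by_cases hy : y = 0 <;> simp [hx, hy, key]

lemma sgn_sum {ι : Type*} (s : Finset ι) (f : ι → ZMod 2) :
    sgn (∑ i ∈ s, f i) = ∏ i ∈ s, sgn (f i) := by
  induction s using Finset.cons_induction with
  | empty => simp [sgn_zero]
  | cons a s ha ih => rw [Finset.sum_cons, Finset.prod_cons, sgn_add, ih]

lemma sum_zmod2 (f : ZMod 2 → ℂ) : ∑ b : ZMod 2, f b = f 0 + f 1 := by
  rw [show (Finset.univ : Finset (ZMod 2)) = {0, 1} by decide]
  rw [Finset.sum_insert (by decide), Finset.sum_singleton]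

lemma sum_sgn_mul (w : ZMod 2) : ∑ b : ZMod 2, sgn (b * w) = if w = 0 then 2 else 0 := by
  rw [sum_zmod2]
  have h1 : ∀ w : ZMod 2, w ≠ 0 → w = 1 := by decide
  have h3 : ((1 : ZMod 2)) ≠ 0 := by decide
  by_cases hw : w = 0
  · simp [sgn, hw]; norm_num
  · rw [h1 w hw]; simp [sgn, h3]

variable {n : ℕ}

def dotp (a w : Fin n → ZMod 2) : ZMod 2 := ∑ i, a i * w i

lemma dotp_comm (a w : Fin n → ZMod 2) : dotp a w = dotp w a := by
  unfold dotp; simp_rw [mul_comm]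

lemma dotp_add_right (a u v : Fin n → ZMod 2) : dotp a (u + v) = dotp a u + dotp a v := by
  unfold dotp
  rw [← Finset.sum_add_distrib]
  simp [mul_add]

lemma dotp_add_left (a b w : Fin n → ZMod 2) : dotp (a + b) w = dotp a w + dotp b w := by
  rw [dotp_comm, dotp_add_right, dotp_comm w a, dotp_comm w b]

lemma sum_chi (w : Fin n → ZMod 2) :
    ∑ a : Fin n → ZMod 2, sgn (dotp a w) = if w = 0 then ((2 : ℂ) ^ n) else 0 := by
  have h1 : ∀ a : Fin n → ZMod 2, sgn (dotp a w) = ∏ i, sgn (a i * w i) := fun a =>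
    sgn_sum Finset.univ _
  simp_rw [h1]
  rw [← Fintype.prod_sum (fun (i : Fin n) (b : ZMod 2) => sgn (b * w i))]
  simp_rw [sum_sgn_mul]
  by_cases hw : w = 0
  · simp [hw]
  · rw [if_neg hw]
    obtain ⟨i, hi⟩ := Function.ne_iff.1 hw
    exact Finset.prod_eq_zero (Finset.mem_univ i) (by simp only [Pi.zero_apply] at hi; simp [hi])

lemma zmod2_add_eq_zero (u v : Fin n → ZMod 2) : u + v = 0 ↔ u = v := by
  have key : ∀ x y : ZMod 2, x + y = 0 ↔ x = y := by decide
  constructor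
  · intro h; funext i; exact (key _ _).1 (congrFun h i)
  · intro h; funext i; exact (key _ _).2 (congrFun h i)

lemma zmod2_sub_eq_add (u v : Fin n → ZMod 2) : u - v = u + v := by
  have key : ∀ x y : ZMod 2, x - y = x + y := by decide
  funext i; exact key _ _

end Characters
section CubeSpectral

variable {n : ℕ}

noncomputable def Emat (a : Fin n → ZMod 2) :
    Matrix (Fin n → ZMod 2) (Fin n → ZMod 2) ℂ :=
  Matrix.of fun u v => ((2 : ℂ) ^ n)⁻¹ * sgn (dotp a (u + v))

noncomputable def lamInt (C : Finset (Fin n → ZMod 2)) (a : Fin n → ZMod 2) : ℤ :=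
  ∑ x ∈ C, (if dotp a x = 0 then 1 else -1)

lemma two_pow_ne : ((2 : ℂ) ^ n) ≠ 0 := pow_ne_zero _ two_ne_zero

lemma Emat_sum : ∑ a : Fin n → ZMod 2, Emat a = (1 : Matrix (Fin n → ZMod 2) (Fin n → ZMod 2) ℂ) := by
  ext u v
  rw [Matrix.sum_apply]
  simp only [Emat, Matrix.of_apply]
  rw [← Finset.mul_sum]
  have h1 : ∀ a : Fin n → ZMod 2, sgn (dotp a (u + v)) = sgn (dotp a (u + v)) := fun _ => rfl
  rw [sum_chi (u + v)]
  rw [Matrix.one_apply]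
  by_cases huv : u = v
  · rw [if_pos ((zmod2_add_eq_zero u v).2 huv), if_pos huv]
    field_simp
  · rw [if_neg (fun h => huv ((zmod2_add_eq_zero u v).1 h)), if_neg huv, mul_zero]

lemma Emat_mul_self (a : Fin n → ZMod 2) : Emat a * Emat a = Emat (n := n) a := by
  ext u v
  rw [Matrix.mul_apply]
  simp only [Emat, Matrix.of_apply]
  have key : ∀ w : Fin n → ZMod 2,
      (((2:ℂ)^n)⁻¹ * sgn (dotp a (u + w))) * (((2:ℂ)^n)⁻¹ * sgn (dotp a (w + v)))
      = (((2:ℂ)^n)⁻¹ * ((2:ℂ)^n)⁻¹ * (sgn (dotp a u) * sgn (dotp a v))) * sgn (dotp w (a + a)) := by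
    intro w
    rw [dotp_add_right, dotp_add_right, sgn_add, sgn_add, dotp_comm w, dotp_add_left, sgn_add]
    ring
  simp_rw [key]
  rw [← Finset.mul_sum, sum_chi (a + a)]
  rw [if_pos ((zmod2_add_eq_zero a a).2 rfl)]
  have : sgn (dotp a u) * sgn (dotp a v) = sgn (dotp a (u + v)) := by
    rw [dotp_add_right, sgn_add]
  field_simp [two_pow_ne]
  rw [← this]

lemma Emat_mul_ne (a b : Fin n → ZMod 2) (hab : a ≠ b) : Emat a * Emat b = 0 := by
  ext u v
  rw [Matrix.mul_apply]
  simp only [Emat, Matrix.of_apply]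
  have key : ∀ w : Fin n → ZMod 2,
      (((2:ℂ)^n)⁻¹ * sgn (dotp a (u + w))) * (((2:ℂ)^n)⁻¹ * sgn (dotp b (w + v)))
      = (((2:ℂ)^n)⁻¹ * ((2:ℂ)^n)⁻¹ * (sgn (dotp a u) * sgn (dotp b v))) * sgn (dotp w (a + b)) := by
    intro w
    rw [dotp_add_right, dotp_add_right, sgn_add, sgn_add, dotp_comm w, dotp_add_left, sgn_add]
    ring
  simp_rw [key]
  rw [← Finset.mul_sum, sum_chi (a + b)]
  rw [if_neg (fun h => hab ((zmod2_add_eq_zero a b).1 h))]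
  simp

lemma cubeAdj_spectral (C : Finset (Fin n → ZMod 2)) :
    cubeAdj C = ∑ a : Fin n → ZMod 2, ((lamInt C a : ℂ)) • Emat a := by
  ext u v
  rw [Matrix.sum_apply]
  simp only [Matrix.smul_apply, Emat, Matrix.of_apply, smul_eq_mul]
  symm
  have hcast : ∀ a, ((lamInt C a : ℂ)) = ∑ x ∈ C, sgn (dotp a x) := by
    intro a
    unfold lamInt sgn
    push_cast
    apply Finset.sum_congr rfl
    intro x _
    split <;> norm_num
  calc ∑ a : Fin n → ZMod 2, (lamInt C a : ℂ) * (((2:ℂ)^n)⁻¹ * sgn (dotp a (u + v)))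
      = ((2:ℂ)^n)⁻¹ * ∑ a : Fin n → ZMod 2, ∑ x ∈ C, sgn (dotp a x) * sgn (dotp a (u + v)) := by
        rw [Finset.mul_sum]
        apply Finset.sum_congr rfl
        intro a _
        rw [hcast a, Finset.sum_mul, Finset.mul_sum]
        apply Finset.sum_congr rfl
        intro x _
        ring
    _ = ((2:ℂ)^n)⁻¹ * ∑ x ∈ C, ∑ a : Fin n → ZMod 2, sgn (dotp a (x + (u + v))) := by
        rw [Finset.sum_comm]
        congr 1
        apply Finset.sum_congr rfl
        intro x _
        apply Finset.sum_congr rfl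
        intro a _
        rw [dotp_add_right a x (u + v), sgn_add]
    _ = ((2:ℂ)^n)⁻¹ * ∑ x ∈ C, (if x = u + v then ((2:ℂ)^n) else 0) := by
        congr 1
        apply Finset.sum_congr rfl
        intro x _
        rw [sum_chi]
        by_cases h : x = u + v
        · rw [if_pos ((zmod2_add_eq_zero x (u + v)).2 h), if_pos h]
        · rw [if_neg (fun hh => h ((zmod2_add_eq_zero _ _).1 hh)), if_neg h]
    _ = cubeAdj C u v := by
        rw [Finset.sum_ite_eq' C (u + v) (fun _ => ((2:ℂ)^n))]
        unfold cubeAdj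
        rw [Matrix.of_apply, zmod2_sub_eq_add]
        by_cases h : u + v ∈ C
        · simp [h, two_pow_ne]
        · simp [h]
  done

lemma lamInt_odd (C : Finset (Fin n → ZMod 2)) (hodd : Odd C.card) (a : Fin n → ZMod 2) :
    lamInt C a % 2 = 1 := by
  unfold lamInt
  rw [Finset.sum_int_mod]
  have : ∀ x ∈ C, ((if dotp a x = 0 then (1:ℤ) else -1) % 2) = 1 := by
    intro x _
    split <;> decide
  rw [Finset.sum_congr rfl this]
  simp only [Finset.sum_const]
  rw [nsmul_eq_mul, mul_one]
  exact Int.odd_iff.1 (Int.odd_coe_nat C.card |>.2 hodd)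

end CubeSpectral
section KronHelpers

variable {l m o w : Type*}

lemma sum_kronecker' {ι : Type*} (s : Finset ι) (f : ι → Matrix l m ℂ) (M : Matrix o w ℂ) :
    (∑ i ∈ s, f i) ⊗ₖ M = ∑ i ∈ s, (f i ⊗ₖ M) := by
  induction s using Finset.cons_induction with
  | empty => simp [Matrix.zero_kronecker]
  | cons a s ha ih => rw [Finset.sum_cons, Finset.sum_cons, Matrix.add_kronecker, ih]

lemma kronecker_sum' {ι : Type*} (s : Finset ι) (M : Matrix l m ℂ) (f : ι → Matrix o w ℂ) :
    M ⊗ₖ (∑ i ∈ s, f i) = ∑ i ∈ s, (M ⊗ₖ f i) := by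
  induction s using Finset.cons_induction with
  | empty => simp [Matrix.kronecker_zero]
  | cons a s ha ih => rw [Finset.sum_cons, Finset.sum_cons, Matrix.kronecker_add, ih]

end KronHelpers

section ZpowHelpers

lemma neg_one_zpow_eq (k : ℤ) : (-1 : ℂ) ^ k = if k % 2 = 0 then 1 else -1 := by
  rcases Int.even_or_odd k with h | h
  · rw [Even.neg_one_zpow h, if_pos (Int.even_iff.1 h)]
  · rw [Odd.neg_one_zpow h, if_neg (by rw [Int.odd_iff.1 h]; norm_num)]

lemma neg_one_zpow_congr {a b : ℤ} (h : a % 2 = b % 2) : (-1 : ℂ) ^ a = (-1 : ℂ) ^ b := by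
  rw [neg_one_zpow_eq, neg_one_zpow_eq, h]

lemma neg_one_zpow_inj {a b : ℤ} (h : (-1 : ℂ) ^ a = (-1 : ℂ) ^ b) : a % 2 = b % 2 := by
  rw [neg_one_zpow_eq, neg_one_zpow_eq] at h
  rcases Int.emod_two_eq a with h1 | h1 <;> rcases Int.emod_two_eq b with h2 | h2 <;>
    rw [h1, h2] <;> rw [h1, h2] at h <;> norm_num at h

lemma exp_pi_I_mul (k : ℤ) : Complex.exp ((Real.pi : ℂ) * Complex.I * k) = (-1 : ℂ) ^ k := by
  rw [mul_comm, Complex.exp_int_mul, Complex.exp_pi_mul_I]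

end ZpowHelpers

theorem periodic_at_pi_iff_same_parity (n : ℕ) (C : Finset (Fin n → ZMod 2))
    (hσ : (∑ x ∈ C, x) = 0) (hodd : Odd C.card)
    {p : Type*} [Fintype p] [DecidableEq p] (q : ℕ)
    (B : Matrix p p ℂ) (μ : Fin q → ℤ) (F : Fin q → Matrix p p ℂ)
    (hB : B = ∑ s, (μ s : ℂ) • F s)
    (hsum : (∑ s, F s) = 1)
    (hproj : ∀ s, F s * F s = F s)
    (horth : ∀ r s, r ≠ s → F r * F s = 0)
    (hFne : ∀ s, F s ≠ 0) :
    (∃ γ : ℂ, ‖γ‖ = 1 ∧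
        NormedSpace.exp (((Real.pi : ℂ) * Complex.I) • (cubeAdj C ⊗ₖ B)) = γ • 1) ↔
      (∀ s t, μ s % 2 = μ t % 2) := by
  -- the joint spectral projections
  set Q : (Fin n → ZMod 2) × Fin q → Matrix ((Fin n → ZMod 2) × p) ((Fin n → ZMod 2) × p) ℂ := fun z => Emat z.1 ⊗ₖ F z.2 with hQ
  set c : (Fin n → ZMod 2) × Fin q → ℂ := fun z =>
    ((Real.pi : ℂ) * Complex.I) * ((lamInt C z.1 * μ z.2 : ℤ) : ℂ) with hc
  have hdecomp : ((Real.pi : ℂ) * Complex.I) • (cubeAdj C ⊗ₖ B) = ∑ z, c z • Q z := by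
    rw [cubeAdj_spectral C, hB, sum_kronecker']
    rw [Fintype.sum_prod_type]
    rw [Finset.smul_sum]
    apply Finset.sum_congr rfl
    intro a _
    rw [kronecker_sum', Finset.smul_sum]
    apply Finset.sum_congr rfl
    intro s _
    rw [Matrix.smul_kronecker, Matrix.kronecker_smul, hc, hQ]
    push_cast
    rw [smul_smul, smul_smul]
    ring_nf
  have hQone : ∑ z, Q z = 1 := by
    rw [Fintype.sum_prod_type]
    have : ∀ a : Fin n → ZMod 2, ∑ s, Q (a, s) = Emat a ⊗ₖ (1 : Matrix p p ℂ) := by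
      intro a
      rw [← hsum, kronecker_sum']
    simp_rw [this]
    rw [← sum_kronecker', Emat_sum, Matrix.one_kronecker_one]
  have hQorth : ∀ z z' : (Fin n → ZMod 2) × Fin q, z ≠ z' → Q z * Q z' = 0 := by
    intro z z' hne
    rw [hQ]
    simp only
    rw [← Matrix.mul_kronecker_mul]
    by_cases h1 : z.1 = z'.1
    · have h2 : z.2 ≠ z'.2 := fun h => hne (Prod.ext h1 h)
      rw [horth _ _ h2, Matrix.kronecker_zero]
    · rw [Emat_mul_ne _ _ h1, Matrix.zero_kronecker]
  have hQidem : ∀ z : (Fin n → ZMod 2) × Fin q, Q z * Q z = Q z := by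
    intro z
    rw [hQ]
    simp only
    rw [← Matrix.mul_kronecker_mul, Emat_mul_self, hproj]
  have key : NormedSpace.exp (((Real.pi : ℂ) * Complex.I) • (cubeAdj C ⊗ₖ B))
      = ∑ s, ((-1 : ℂ) ^ (μ s)) • ((1 : Matrix (Fin n → ZMod 2) (Fin n → ZMod 2) ℂ) ⊗ₖ F s) := by
    rw [hdecomp, exp_spectral c Q hQone hQorth hQidem]
    have hval : ∀ z : (Fin n → ZMod 2) × Fin q, Complex.exp (c z) = (-1 : ℂ) ^ (μ z.2) := by
      intro z
      rw [hc]
      simp only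
      rw [exp_pi_I_mul]
      apply neg_one_zpow_congr
      rw [Int.mul_emod, lamInt_odd C hodd z.1, one_mul, Int.emod_emod_of_dvd _ dvd_rfl]
    simp_rw [hval]
    rw [Fintype.sum_prod_type_right]
    apply Finset.sum_congr rfl
    intro s _
    show ∑ a : Fin n → ZMod 2, (-1 : ℂ) ^ (μ s) • (Emat a ⊗ₖ F s) = _
    rw [← Finset.smul_sum, ← sum_kronecker', Emat_sum]
  constructor
  · rintro ⟨γ, _, hexp⟩ s t
    rw [key] at hexp
    have hval : ∀ r, ((-1 : ℂ) ^ (μ r)) = γ := by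
      intro r
      have h2 := congrArg (fun M => M * ((1 : Matrix (Fin n → ZMod 2) (Fin n → ZMod 2) ℂ) ⊗ₖ F r)) hexp
      simp only [Finset.sum_mul, Algebra.smul_mul_assoc] at h2
      have h3 : ∀ s, ((1 : Matrix (Fin n → ZMod 2) (Fin n → ZMod 2) ℂ) ⊗ₖ F s) * ((1 : Matrix (Fin n → ZMod 2) (Fin n → ZMod 2) ℂ) ⊗ₖ F r)
          = if s = r then (1 : Matrix (Fin n → ZMod 2) (Fin n → ZMod 2) ℂ) ⊗ₖ F r else 0 := by
        intro s
        rw [← Matrix.mul_kronecker_mul, one_mul]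
        by_cases h : s = r
        · rw [if_pos h, h, hproj]
        · rw [if_neg h, horth _ _ h, Matrix.kronecker_zero]
      simp_rw [h3, smul_ite, smul_zero] at h2
      rw [Finset.sum_ite_eq' Finset.univ r
        (fun s => ((-1 : ℂ) ^ (μ s)) • ((1 : Matrix (Fin n → ZMod 2) (Fin n → ZMod 2) ℂ) ⊗ₖ F r)),
        if_pos (Finset.mem_univ r), one_mul] at h2
      have hkne : (1 : Matrix (Fin n → ZMod 2) (Fin n → ZMod 2) ℂ) ⊗ₖ F r ≠ 0 := by
        intro h0
        apply hFne r
        ext i j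
        have h1 := congrFun (congrFun h0 ((fun _ => 0 : Fin n → ZMod 2), i))
          ((fun _ => 0 : Fin n → ZMod 2), j)
        simpa [Matrix.kroneckerMap_apply, Matrix.one_apply] using h1
      have h5 : (((-1 : ℂ) ^ (μ r) - γ)) • ((1 : Matrix (Fin n → ZMod 2) (Fin n → ZMod 2) ℂ) ⊗ₖ F r) = 0 := by
        rw [sub_smul, h2, sub_self]
      rcases smul_eq_zero.1 h5 with h6 | h6
      · exact sub_eq_zero.1 h6
      · exact absurd h6 hkne
    exact neg_one_zpow_inj ((hval s).trans (hval t).symm)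
  · intro hpar
    rcases Nat.eq_zero_or_pos q with hq | hq
    · subst hq
      have hp : IsEmpty p := by
        by_contra h
        rw [not_isEmpty_iff] at h
        obtain ⟨i⟩ := h
        have h0 := congrFun (congrFun hsum i) i
        simp [Matrix.one_apply] at h0
      refine ⟨1, by simp, ?_⟩
      ext ⟨a, i⟩ ⟨b, j⟩
      exact (hp.false i).elim
    · set t0 : Fin q := ⟨0, hq⟩
      refine ⟨(-1 : ℂ) ^ (μ t0), ?_, ?_⟩
      · rw [norm_zpow]
        simp
      · rw [key]
        have : ∀ s : Fin q, ((-1 : ℂ) ^ (μ s)) • ((1 : Matrix (Fin n → ZMod 2) (Fin n → ZMod 2) ℂ) ⊗ₖ F s)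
            = ((-1 : ℂ) ^ (μ t0)) • ((1 : Matrix (Fin n → ZMod 2) (Fin n → ZMod 2) ℂ) ⊗ₖ F s) := by
          intro s
          rw [neg_one_zpow_congr (hpar s t0)]
        rw [Finset.sum_congr rfl (fun s _ => this s), ← Finset.smul_sum, ← kronecker_sum', hsum,
          Matrix.one_kronecker_one]
end
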